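/- For 1 < α < 2 and |z| ≤ 1 with z ∈ ℂ, the series ∑_{k=0}^∞ ω_k^α z^k converges absolutely and equals (1 - z)^α, where the power is the principal branch. -/

import Mathlib

open Finset Metric Complex

noncomputable def genBinom (α : ℝ) (k : ℕ) : ℝ :=
  (∏ i ∈ Finset.range k, (α - i)) / (Nat.factorial k)

noncomputable def omegaCoeff (α : ℝ) (k : ℕ) : ℝ := (-1 : ℝ) ^ k * genBinom α k

lemma genBinom_zero (α : ℝ) : genBinom α 0 = 1 := by simp [genBinom]

lemma omegaCoeff_zero (α : ℝ) : omegaCoeff α 0 = 1 := by simp [omegaCoeff, genBinom_zero]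

lemma genBinom_succ (α : ℝ) (k : ℕ) :
    (k + 1 : ℝ) * genBinom α (k + 1) = (α - k) * genBinom α k := by
  have h1 : (Nat.factorial k : ℝ) ≠ 0 := Nat.cast_ne_zero.2 (Nat.factorial_ne_zero k)
  have h2 : (k : ℝ) + 1 ≠ 0 := by positivity
  simp only [genBinom, Finset.prod_range_succ, Nat.factorial_succ, Nat.cast_mul, Nat.cast_add,
    Nat.cast_one]
  field_simp

lemma genBinom_succ' (α : ℝ) (k : ℕ) :
    genBinom α (k + 1) = (α - k) / (k + 1) * genBinom α k := by
  have h2 : (0:ℝ) < (k : ℝ) + 1 := by positivity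
  field_simp
  linarith [genBinom_succ α k]

lemma omegaCoeff_succ (α : ℝ) (k : ℕ) :
    omegaCoeff α (k + 1) = ((k : ℝ) - α) / (k + 1) * omegaCoeff α k := by
  simp only [omegaCoeff, genBinom_succ' α k, pow_succ]
  ring

lemma prod_shift (α : ℝ) (k : ℕ) :
    ∏ i ∈ Finset.range (k + 1), (α - i) = α * ∏ i ∈ Finset.range k, (α - 1 - i) := by
  rw [Finset.prod_range_succ']
  simp only [Nat.cast_zero, sub_zero, Nat.cast_add, Nat.cast_one]
  rw [mul_comm]
  congr 1
  apply Finset.prod_congr rfl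
  intro i _
  ring

lemma genBinom_pascal (α : ℝ) (k : ℕ) :
    genBinom α (k + 1) = genBinom (α - 1) (k + 1) + genBinom (α - 1) k := by
  have h1 : (Nat.factorial k : ℝ) ≠ 0 := Nat.cast_ne_zero.2 (Nat.factorial_ne_zero k)
  have h2 : (k : ℝ) + 1 ≠ 0 := by positivity
  have hs := prod_shift α k
  have hp : ∏ i ∈ Finset.range (k+1), (α - 1 - (i:ℝ)) =
      (∏ i ∈ Finset.range k, (α - 1 - (i:ℝ))) * (α - 1 - k) := Finset.prod_range_succ _ _
  simp only [genBinom, Nat.factorial_succ, Nat.cast_mul, Nat.cast_add, Nat.cast_one, hs, hp]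
  field_simp
  ring

lemma sum_omegaCoeff (α : ℝ) (n : ℕ) :
    ∑ k ∈ Finset.range (n + 1), omegaCoeff α k = omegaCoeff (α - 1) n := by
  induction n with
  | zero => simp [omegaCoeff_zero]
  | succ n ih =>
    rw [Finset.sum_range_succ, ih]
    simp only [omegaCoeff, genBinom_pascal α n]
    rw [pow_succ]
    ring

lemma genBinom_shift (α : ℝ) (k : ℕ) :
    ((k : ℝ) + 1) * genBinom α (k + 1) = α * genBinom (α - 1) k := by
  have h1 : (Nat.factorial k : ℝ) ≠ 0 := Nat.cast_ne_zero.2 (Nat.factorial_ne_zero k)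
  have h2 : (k : ℝ) + 1 ≠ 0 := by positivity
  have hs := prod_shift α k
  simp only [genBinom, Nat.factorial_succ, Nat.cast_mul, Nat.cast_add, Nat.cast_one, hs]
  field_simp


lemma omegaCoeff_shift (α : ℝ) (k : ℕ) :
    ((k : ℝ) + 1) * omegaCoeff α (k + 1) = -α * omegaCoeff (α - 1) k := by
  simp only [omegaCoeff, pow_succ]
  linear_combination ((-1:ℝ)^k * (-1)) * genBinom_shift α k

-- |ω_k^β| ≤ 1 for -1 ≤ β ≤ 1
lemma abs_omegaCoeff_le_one {β : ℝ} (h0 : -1 ≤ β) (h1 : β ≤ 1) (k : ℕ) :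
    |omegaCoeff β k| ≤ 1 := by
  induction k with
  | zero => simp [omegaCoeff_zero]
  | succ k ih =>
    rw [omegaCoeff_succ, abs_mul, abs_div]
    have hk1 : (0:ℝ) < (k:ℝ) + 1 := by positivity
    have h2 : |(k:ℝ) - β| ≤ (k:ℝ) + 1 := by
      rw [abs_le]; constructor <;> [linarith; linarith]
    have h3 : |(k:ℝ) - β| / |(k:ℝ) + 1| ≤ 1 := by
      rw [abs_of_pos hk1, div_le_one hk1]; exact h2
    calc |(k:ℝ) - β| / |(k:ℝ) + 1| * |omegaCoeff β k| ≤ 1 * 1 := by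
          apply mul_le_mul h3 ih (abs_nonneg _) zero_le_one
      _ = 1 := one_mul 1

-- ω_k^γ ≥ 0 for γ ≤ 0
lemma omegaCoeff_nonneg {γ : ℝ} (h : γ ≤ 0) (k : ℕ) : 0 ≤ omegaCoeff γ k := by
  induction k with
  | zero => simp [omegaCoeff_zero]
  | succ k ih =>
    rw [omegaCoeff_succ]
    have : (0:ℝ) ≤ ((k:ℝ) - γ) / (k + 1) := by
      apply div_nonneg (by linarith [Nat.cast_nonneg (α := ℝ) k]) (by positivity)
    exact mul_nonneg this ih

-- ω_k^β ≤ 0 for k ≥ 1, 0 ≤ β ≤ 1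
lemma omegaCoeff_nonpos {β : ℝ} (h0 : 0 ≤ β) (h1 : β ≤ 1) {k : ℕ} (hk : 1 ≤ k) :
    omegaCoeff β k ≤ 0 := by
  induction k with
  | zero => omega
  | succ k ih =>
    rcases Nat.eq_or_lt_of_le hk with h | h
    · have : omegaCoeff β 1 = (0 - β)/(0+1) * omegaCoeff β 0 := by
        have := omegaCoeff_succ β 0; simpa using this
      rw [← h, this, omegaCoeff_zero]
      simp; linarith
    · have hk' : 1 ≤ k := by omega
      rw [omegaCoeff_succ]
      have hnum : (0:ℝ) ≤ ((k:ℝ) - β) / (k + 1) := by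
        apply div_nonneg _ (by positivity)
        have : (1:ℝ) ≤ (k:ℝ) := by exact_mod_cast hk'
        linarith
      exact mul_nonpos_iff.2 (Or.inl ⟨hnum, ih hk'⟩)


lemma summable_abs_omegaCoeff {β : ℝ} (h0 : 0 ≤ β) (h1 : β ≤ 1) :
    Summable (fun k => |omegaCoeff β k|) := by
  apply summable_of_sum_range_le (c := 2) (fun n => abs_nonneg _)
  intro n
  rcases Nat.eq_zero_or_pos n with rfl | hn
  · simp
  obtain ⟨m, rfl⟩ := Nat.exists_eq_add_of_le hn
  have key : ∑ k ∈ range (1 + m), (|omegaCoeff β k| + omegaCoeff β k) = 2 := by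
    rw [add_comm 1 m]
    rw [Finset.sum_eq_single_of_mem 0 (Finset.mem_range.2 (Nat.succ_pos m))]
    · rw [omegaCoeff_zero]; norm_num
    · intro k _ hk
      have hk1 : 1 ≤ k := Nat.one_le_iff_ne_zero.2 hk
      have := omegaCoeff_nonpos h0 h1 hk1
      rw [abs_of_nonpos this]; ring
  have hsum : ∑ k ∈ range (1 + m), omegaCoeff β k = omegaCoeff (β - 1) m := by
    rw [add_comm 1 m]; exact sum_omegaCoeff β m
  have h2 : ∑ k ∈ range (1 + m), |omegaCoeff β k| = 2 - omegaCoeff (β - 1) m := by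
    have := Finset.sum_add_distrib (s := range (1+m))
      (f := fun k => |omegaCoeff β k|) (g := fun k => omegaCoeff β k)
    rw [this, hsum] at key
    linarith
  rw [h2]
  linarith [omegaCoeff_nonneg (by linarith : β - 1 ≤ 0) m]

-- main summability for 1 < α < 2
lemma summable_abs_omegaCoeff' {α : ℝ} (h1 : 1 < α) (h2 : α < 2) :
    Summable (fun k => |omegaCoeff α k|) := by
  have hβ := summable_abs_omegaCoeff (β := α - 1) (by linarith) (by linarith)
  rw [← summable_nat_add_iff 1]
  apply Summable.of_nonneg_of_le (fun k => abs_nonneg _) _ (hβ.mul_left α)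
  intro k
  have hk1 : (0:ℝ) < (k:ℝ) + 1 := by positivity
  have := omegaCoeff_shift α k
  have habs : ((k:ℝ) + 1) * |omegaCoeff α (k + 1)| = α * |omegaCoeff (α - 1) k| := by
    have := congrArg (abs : ℝ → ℝ) this
    rwa [abs_mul, abs_mul, abs_of_pos hk1, abs_neg, abs_of_pos (by linarith : (0:ℝ) < α)] at this
  have h3 : |omegaCoeff α (k + 1)| = α * |omegaCoeff (α - 1) k| / ((k:ℝ) + 1) := by
    field_simp at habs ⊢; linarith
  rw [h3]
  rw [div_le_iff₀ hk1]
  have : (0:ℝ) ≤ α * |omegaCoeff (α-1) k| := by positivity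
  nlinarith

-- summability of derivative bound u k = k * |ω_k|
lemma summable_mul_abs_omegaCoeff {α : ℝ} (h1 : 1 < α) (h2 : α < 2) :
    Summable (fun k : ℕ => (k:ℝ) * |omegaCoeff α k|) := by
  have hβ := summable_abs_omegaCoeff (β := α - 1) (by linarith) (by linarith)
  rw [← summable_nat_add_iff 1]
  have heq : (fun k => ((k:ℕ)+1 : ℝ) * |omegaCoeff α (k + 1)|) =
      fun k => α * |omegaCoeff (α - 1) k| := by
    funext k
    have := congrArg (abs : ℝ → ℝ) (omegaCoeff_shift α k)
    rw [abs_mul, abs_mul, abs_of_pos (by positivity : (0:ℝ) < (k:ℝ)+1), abs_neg,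
      abs_of_pos (by linarith : (0:ℝ) < α)] at this
    push_cast
    linarith
  simp only [Nat.cast_add, Nat.cast_one]
  rw [heq]
  exact hβ.mul_left α


section main
variable {α : ℝ} (hα1 : 1 < α) (hα2 : α < 2)

-- the complex series terms
noncomputable def gTerm (α : ℝ) (n : ℕ) (y : ℂ) : ℂ := (omegaCoeff α n : ℂ) * y ^ n
noncomputable def gTerm' (α : ℝ) (n : ℕ) (y : ℂ) : ℂ := (omegaCoeff α n : ℂ) * ((n : ℂ) * y ^ (n - 1))

lemma norm_gTerm_le {α : ℝ} {n : ℕ} {y : ℂ} (hy : ‖y‖ ≤ 1) :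
    ‖gTerm α n y‖ ≤ |omegaCoeff α n| := by
  rw [gTerm, norm_mul, norm_pow]
  have h1 : ‖(omegaCoeff α n : ℂ)‖ = |omegaCoeff α n| := by
    rw [Complex.norm_real, Real.norm_eq_abs]
  rw [h1]
  calc |omegaCoeff α n| * ‖y‖ ^ n ≤ |omegaCoeff α n| * 1 := by
        apply mul_le_mul_of_nonneg_left _ (abs_nonneg _)
        exact pow_le_one₀ (norm_nonneg _) hy
    _ = _ := mul_one _

lemma norm_gTerm'_le {α : ℝ} {n : ℕ} {y : ℂ} (hy : ‖y‖ ≤ 1) :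
    ‖gTerm' α n y‖ ≤ (n:ℝ) * |omegaCoeff α n| := by
  rw [gTerm', norm_mul, norm_mul, norm_pow, Complex.norm_real, Real.norm_eq_abs,
    Complex.norm_natCast]
  have : ‖y‖ ^ (n-1) ≤ 1 := pow_le_one₀ (norm_nonneg _) hy
  calc |omegaCoeff α n| * ((n:ℝ) * ‖y‖ ^ (n-1)) ≤ |omegaCoeff α n| * ((n:ℝ) * 1) := by
        apply mul_le_mul_of_nonneg_left _ (abs_nonneg _)
        exact mul_le_mul_of_nonneg_left this (Nat.cast_nonneg n)
    _ = (n:ℝ) * |omegaCoeff α n| := by ring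

include hα1 hα2 in
lemma hasDerivAt_f : ∀ y ∈ ball (0:ℂ) 1,
    HasDerivAt (fun z => ∑' n, gTerm α n z) (∑' n, gTerm' α n y) y := by
  intro y hy
  apply hasDerivAt_tsum_of_isPreconnected (summable_mul_abs_omegaCoeff hα1 hα2)
    isOpen_ball (convex_ball _ _).isPreconnected
  · intro n z _
    exact (hasDerivAt_pow n z).const_mul ((omegaCoeff α n : ℂ))
  · intro n z hz
    have hz1 : ‖z‖ ≤ 1 := by
      rw [mem_ball, dist_zero_right] at hz; exact hz.le
    exact norm_gTerm'_le hz1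
  · exact mem_ball_self one_pos
  · apply Summable.of_norm
    apply Summable.of_nonneg_of_le (fun n => norm_nonneg _)
      (fun n => norm_gTerm_le (by simp))
    exact summable_abs_omegaCoeff' hα1 hα2
  · exact hy

include hα1 hα2 in
lemma deriv_identity : ∀ y ∈ ball (0:ℂ) 1,
    (1 - y) * (∑' n, gTerm' α n y) = -(α:ℂ) * ∑' n, gTerm α n y := by
  intro y hy
  have hy1 : ‖y‖ ≤ 1 := by rw [mem_ball, dist_zero_right] at hy; exact hy.le
  have hs0 : Summable (fun n => gTerm α n y) :=
    Summable.of_norm (Summable.of_nonneg_of_le (fun n => norm_nonneg _)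
      (fun n => norm_gTerm_le hy1) (summable_abs_omegaCoeff' hα1 hα2))
  have hs1 : Summable (fun n => gTerm' α n y) :=
    Summable.of_norm (Summable.of_nonneg_of_le (fun n => norm_nonneg _)
      (fun n => norm_gTerm'_le hy1) (summable_mul_abs_omegaCoeff hα1 hα2))
  have hsk : Summable (fun n : ℕ => (n:ℂ) * gTerm α n y) := by
    apply Summable.of_norm
    apply Summable.of_nonneg_of_le (fun n => norm_nonneg _) _
      (summable_mul_abs_omegaCoeff hα1 hα2)
    intro n
    rw [norm_mul, Complex.norm_natCast]
    exact mul_le_mul_of_nonneg_left (norm_gTerm_le hy1) (Nat.cast_nonneg n)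
  -- ∑' g' = ∑' (n+1) terms
  have e1 : ∑' n, gTerm' α n y = ∑' n, gTerm' α (n+1) y := by
    rw [Summable.tsum_eq_zero_add hs1]
    simp [gTerm']
  -- recurrence: (n+1) ω_{n+1} = (n - α) ω_n
  have e2 : ∀ n : ℕ, gTerm' α (n+1) y = ((n:ℂ) - α) * gTerm α n y := by
    intro n
    have hr : ((n:ℝ) + 1) * omegaCoeff α (n+1) = ((n:ℝ) - α) * omegaCoeff α n := by
      rw [omegaCoeff_succ]
      field_simp
    have hrc : ((n:ℂ) + 1) * (omegaCoeff α (n+1) : ℂ) = ((n:ℂ) - (α:ℂ)) * (omegaCoeff α n : ℂ) := by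
      exact_mod_cast congrArg (fun t : ℝ => (t : ℂ)) hr
    simp only [gTerm', gTerm, Nat.add_sub_cancel, Nat.cast_add, Nat.cast_one]
    calc (omegaCoeff α (n+1) : ℂ) * (((n:ℂ)+1) * y ^ n)
        = (((n:ℂ)+1) * (omegaCoeff α (n+1) : ℂ)) * y ^ n := by ring
      _ = (((n:ℂ) - α) * (omegaCoeff α n : ℂ)) * y ^ n := by rw [hrc]
      _ = ((n:ℂ) - α) * gTerm α n y := by rw [gTerm]; ring
  have e3 : ∑' n, gTerm' α n y = (∑' n : ℕ, (n:ℂ) * gTerm α n y) - (α:ℂ) * ∑' n, gTerm α n y := by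
    rw [e1]
    calc ∑' n, gTerm' α (n+1) y = ∑' n : ℕ, ((n:ℂ) * gTerm α n y - (α:ℂ) * gTerm α n y) := by
          apply tsum_congr; intro n; rw [e2]; ring
      _ = (∑' n : ℕ, (n:ℂ) * gTerm α n y) - ∑' n : ℕ, (α:ℂ) * gTerm α n y :=
          Summable.tsum_sub hsk (hs0.mul_left _)
      _ = _ := by rw [tsum_mul_left]
  -- ∑ n w_n y^n with n factor = y * ∑ g'
  have e4 : ∑' n : ℕ, (n:ℂ) * gTerm α n y = y * ∑' n, gTerm' α n y := by
    rw [← tsum_mul_left]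
    apply tsum_congr
    intro n
    cases n with
    | zero => simp [gTerm, gTerm']
    | succ m =>
      simp only [gTerm, gTerm', Nat.add_sub_cancel]
      rw [pow_succ]
      push_cast
      ring
  have h : ∑' n, gTerm' α n y = y * (∑' n, gTerm' α n y) - (α:ℂ) * ∑' n, gTerm α n y := by
    conv_lhs => rw [e3, e4]
  linear_combination h

end main




lemma one_sub_mem_slit {y : ℂ} (hy : y ∈ ball (0:ℂ) 1) : (1 - y) ∈ Complex.slitPlane := by
  rw [Complex.mem_slitPlane_iff]
  left
  rw [mem_ball, dist_zero_right] at hy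
  have : y.re ≤ ‖y‖ := Complex.re_le_norm y
  simp only [Complex.sub_re, Complex.one_re]
  have : ‖y‖ < 1 := hy
  have h2 := Complex.re_le_norm y
  linarith

lemma one_sub_ne_zero {y : ℂ} (hy : y ∈ ball (0:ℂ) 1) : (1 : ℂ) - y ≠ 0 := by
  intro h
  rw [mem_ball, dist_zero_right] at hy
  have : y = 1 := by linear_combination -h
  rw [this] at hy
  simp at hy

theorem tsum_eq_cpow {α : ℝ} (hα1 : 1 < α) (hα2 : α < 2) :
    ∀ z ∈ ball (0:ℂ) 1, ∑' n, gTerm α n z = (1 - z) ^ (α:ℂ) := by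
  set f : ℂ → ℂ := fun z => ∑' n, gTerm α n z with hf_def
  set F : ℂ → ℂ := fun z => f z * (1 - z) ^ (-(α:ℂ)) with hF_def
  have hF : ∀ y ∈ ball (0:ℂ) 1, HasDerivAt F 0 y := by
    intro y hy
    have h1 : HasDerivAt f (∑' n, gTerm' α n y) y := hasDerivAt_f hα1 hα2 y hy
    have hslit := one_sub_mem_slit hy
    have hne := one_sub_ne_zero hy
    have h2 : HasDerivAt (fun w : ℂ => (1 - w) ^ (-(α:ℂ)))
        (-(α:ℂ) * (1 - y) ^ (-(α:ℂ) - 1) * (-1)) y :=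
      HasDerivAt.cpow_const ((hasDerivAt_id y).const_sub 1) hslit
    have h3 := h1.mul h2
    apply h3.congr_deriv
    symm
    have hsplit : (1 - y) ^ (-(α:ℂ) - 1) * (1 - y) ^ (1:ℂ) = (1 - y) ^ (-(α:ℂ)) := by
      rw [← Complex.cpow_add _ _ hne]
      norm_num
    rw [Complex.cpow_one] at hsplit
    rw [← hsplit]
    have hid := deriv_identity hα1 hα2 y hy
    calc (0:ℂ) = (-(α:ℂ) * f y + (α:ℂ) * f y) * (1 - y) ^ (-(α:ℂ) - 1) := by ring
      _ = ((1 - y) * (∑' n, gTerm' α n y) + (α:ℂ) * f y) * (1 - y) ^ (-(α:ℂ) - 1) := by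
          rw [hid]
      _ = (∑' n, gTerm' α n y) * ((1 - y) ^ (-(α:ℂ) - 1) * (1 - y) ^ (0+1)) +
          f y * (-(α:ℂ) * (1 - y) ^ (-(α:ℂ) - 1) * -1) := by
          rw [pow_succ]; ring
      _ = (∑' n, gTerm' α n y) * ((1 - y) ^ (-(α:ℂ) - 1) * (1 - y)) +
          f y * (-(α:ℂ) * (1 - y) ^ (-(α:ℂ) - 1) * -1) := by norm_num
  have hconst : ∀ z ∈ ball (0:ℂ) 1, F z = F 0 := by
    intro z hz
    apply (convex_ball (0:ℂ) 1).is_const_of_fderivWithin_eq_zero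
      (fun y hy => ((hF y hy).differentiableAt).differentiableWithinAt)
      _ hz (mem_ball_self one_pos)
    intro x hx
    rw [fderivWithin_of_isOpen isOpen_ball hx, (hF x hx).hasFDerivAt.fderiv]
    ext w
    simp
  have hF0 : F 0 = 1 := by
    have hf0 : f 0 = 1 := by
      show (∑' n, gTerm α n 0) = 1
      rw [tsum_eq_single 0]
      · simp [gTerm, omegaCoeff_zero]
      · intro n hn
        simp [gTerm, zero_pow hn]
    simp [hF_def, hf0]
  intro z hz
  have h1 : f z * (1 - z) ^ (-(α:ℂ)) = 1 := (hconst z hz).trans hF0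
  have hne := one_sub_ne_zero hz
  have h2 : (1 - z) ^ (-(α:ℂ)) * (1 - z) ^ (α:ℂ) = 1 := by
    rw [← Complex.cpow_add _ _ hne]
    simp
  calc f z = f z * ((1 - z) ^ (-(α:ℂ)) * (1 - z) ^ (α:ℂ)) := by rw [h2, mul_one]
    _ = (f z * (1 - z) ^ (-(α:ℂ))) * (1 - z) ^ (α:ℂ) := by ring
    _ = (1 - z) ^ (α:ℂ) := by rw [h1, one_mul]



theorem stmt4 (α : ℝ) (hα1 : 1 < α) (hα2 : α < 2) (z : ℂ) (hz : ‖z‖ ≤ 1) :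
    Summable (fun k : ℕ => ‖(omegaCoeff α k : ℂ) * z ^ k‖) ∧
      HasSum (fun k : ℕ => (omegaCoeff α k : ℂ) * z ^ k) ((1 - z) ^ (α : ℂ)) := by
  have hz' : ‖z‖ ≤ 1 := hz
  have hsum : Summable (fun k : ℕ => ‖(omegaCoeff α k : ℂ) * z ^ k‖) := by
    apply Summable.of_nonneg_of_le (fun n => norm_nonneg _)
      (fun n => norm_gTerm_le hz') (summable_abs_omegaCoeff' hα1 hα2)
  refine ⟨hsum, ?_⟩
  have hs : Summable (fun k : ℕ => (omegaCoeff α k : ℂ) * z ^ k) := Summable.of_norm hsum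
  have key : ∑' n, gTerm α n z = (1 - z) ^ (α:ℂ) := by
    set f : ℂ → ℂ := fun y => ∑' n, gTerm α n y with hf_def
    set g : ℂ → ℂ := fun y => (1 - y) ^ (α:ℂ) with hg_def
    have hzc : z ∈ closedBall (0:ℂ) 1 := by
      rw [mem_closedBall, dist_zero_right]; exact hz'
    have hfc : ContinuousOn f (closedBall (0:ℂ) 1) := by
      apply continuousOn_tsum (u := fun n => |omegaCoeff α n|)
      · intro i
        show ContinuousOn (fun y : ℂ => (omegaCoeff α i : ℂ) * y ^ i) (closedBall (0:ℂ) 1)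
        exact (continuous_const.mul (continuous_pow i)).continuousOn
      · exact summable_abs_omegaCoeff' hα1 hα2
      · intro n y hy
        rw [mem_closedBall, dist_zero_right] at hy
        exact norm_gTerm_le hy
    have hgc : ContinuousOn g (closedBall (0:ℂ) 1) := by
      intro y hy
      rw [mem_closedBall, dist_zero_right] at hy
      have hre : 0 ≤ (1 - y).re := by
        simp only [Complex.sub_re, Complex.one_re]
        have := Complex.re_le_norm y
        have : y.re ≤ 1 := le_trans (Complex.re_le_norm y) hy
        linarith
      have hca : ContinuousAt (fun w : ℂ => w ^ (α:ℂ)) (1 - y) :=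
        continuousAt_cpow_const_of_re_pos (Or.inl hre) (by simpa using (by linarith : (0:ℝ) < α))
      exact (hca.comp ((continuous_const.sub continuous_id).continuousAt)).continuousWithinAt
    have hcl : z ∈ closure (ball (0:ℂ) 1) := by
      rw [closure_ball (0:ℂ) one_ne_zero]; exact hzc
    have hnb : (nhdsWithin z (ball (0:ℂ) 1)).NeBot :=
      mem_closure_iff_nhdsWithin_neBot.1 hcl
    have htf : Filter.Tendsto f (nhdsWithin z (ball (0:ℂ) 1)) (nhds (f z)) :=
      (hfc z hzc).mono_left (nhdsWithin_mono z ball_subset_closedBall)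
    have htg : Filter.Tendsto f (nhdsWithin z (ball (0:ℂ) 1)) (nhds (g z)) := by
      apply Filter.Tendsto.congr' _ ((hgc z hzc).mono_left (nhdsWithin_mono z ball_subset_closedBall))
      filter_upwards [self_mem_nhdsWithin] with y hy
      exact (tsum_eq_cpow hα1 hα2 y hy).symm
    exact tendsto_nhds_unique htf htg
  have : HasSum (fun k : ℕ => (omegaCoeff α k : ℂ) * z ^ k) (∑' n, gTerm α n z) := by
    have : (fun k : ℕ => (omegaCoeff α k : ℂ) * z ^ k) = fun n => gTerm α n z := rfl
    rw [this]
    exact hs.hasSum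
  rwa [key] at this
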